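/- For continuous linear automorphisms S, T of a Banach space B, the induced operators on ℓ^∞(ℤ, B) satisfy ‖T_∞ − S_∞‖ ≤ ‖T − S‖. Consequently, the shadowing property is open in the operator-norm topology on linear automorphisms. -/

import Mathlib

open Function Filter Finset

/-- Shadowing property for a continuous linear automorphism. -/
def Shadowing {X : Type*} [SeminormedAddCommGroup X] [Module ℝ X] (T : X ≃L[ℝ] X) : Prop :=
  ∀ ε > (0 : ℝ), ∃ δ > (0 : ℝ), ∀ x : ℤ → X,
    (∀ n : ℤ, ‖x (n + 1) - T (x n)‖ < δ) →
    ∃ y : X, ∀ n : ℤ, ‖x n - (T ^ n) y‖ < ε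

section Aux

variable {B : Type*} [NormedAddCommGroup B] [NormedSpace ℝ B]

/-- The operator `x ↦ (n ↦ x (n+1) - A (x n))` on `ℓ^∞(ℤ, B)`. -/
noncomputable def Linf (A : B →L[ℝ] B) :
    lp (fun _ : ℤ => B) ⊤ →L[ℝ] lp (fun _ : ℤ => B) ⊤ :=
  LinearMap.mkContinuous
    { toFun := fun x => ⟨fun n => (x : ∀ _ : ℤ, B) (n + 1) - A ((x : ∀ _ : ℤ, B) n),
        memℓp_infty ⟨(1 + ‖A‖) * ‖x‖, by
          rintro r ⟨n, rfl⟩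
          have h1 : ‖(x : ∀ _ : ℤ, B) (n + 1)‖ ≤ ‖x‖ :=
            lp.norm_apply_le_norm ENNReal.top_ne_zero x (n + 1)
          have h2 : ‖(x : ∀ _ : ℤ, B) n‖ ≤ ‖x‖ :=
            lp.norm_apply_le_norm ENNReal.top_ne_zero x n
          have h3 : ‖A ((x : ∀ _ : ℤ, B) n)‖ ≤ ‖A‖ * ‖x‖ :=
            (A.le_opNorm _).trans (by nlinarith [norm_nonneg A])
          calc ‖(x : ∀ _ : ℤ, B) (n + 1) - A ((x : ∀ _ : ℤ, B) n)‖
              ≤ ‖(x : ∀ _ : ℤ, B) (n + 1)‖ + ‖A ((x : ∀ _ : ℤ, B) n)‖ := norm_sub_le _ _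
            _ ≤ (1 + ‖A‖) * ‖x‖ := by nlinarith⟩⟩
      map_add' := fun x y => by
        ext n
        simp [lp.coeFn_add, Pi.add_apply]
        erw [Pi.add_apply]
        abel
      map_smul' := fun c x => by
        ext n
        simp [lp.coeFn_smul, Pi.smul_apply, smul_sub] }
    (1 + ‖A‖)
    (fun x => by
      refine lp.norm_le_of_forall_le (by positivity) fun n => ?_
      have h1 : ‖(x : ∀ _ : ℤ, B) (n + 1)‖ ≤ ‖x‖ :=
        lp.norm_apply_le_norm ENNReal.top_ne_zero x (n + 1)
      have h2 : ‖(x : ∀ _ : ℤ, B) n‖ ≤ ‖x‖ :=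
        lp.norm_apply_le_norm ENNReal.top_ne_zero x n
      have h3 : ‖A ((x : ∀ _ : ℤ, B) n)‖ ≤ ‖A‖ * ‖x‖ :=
        (A.le_opNorm _).trans (by nlinarith [norm_nonneg A])
      calc ‖(x : ∀ _ : ℤ, B) (n + 1) - A ((x : ∀ _ : ℤ, B) n)‖
          ≤ ‖(x : ∀ _ : ℤ, B) (n + 1)‖ + ‖A ((x : ∀ _ : ℤ, B) n)‖ := norm_sub_le _ _
        _ ≤ (1 + ‖A‖) * ‖x‖ := by nlinarith)

lemma Linf_apply (A : B →L[ℝ] B) (x : lp (fun _ : ℤ => B) ⊤) (n : ℤ) :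
    (Linf A x : ∀ _ : ℤ, B) n = (x : ∀ _ : ℤ, B) (n + 1) - A ((x : ∀ _ : ℤ, B) n) := rfl

/-- Key norm estimate. -/
lemma norm_Ldiff_le (A A' : B →L[ℝ] B)
    (LA LA' : lp (fun _ : ℤ => B) ⊤ →L[ℝ] lp (fun _ : ℤ => B) ⊤)
    (hA : ∀ (x : lp (fun _ : ℤ => B) ⊤) (n : ℤ),
      (LA x : ∀ _ : ℤ, B) n = (x : ∀ _ : ℤ, B) (n + 1) - A ((x : ∀ _ : ℤ, B) n))
    (hA' : ∀ (x : lp (fun _ : ℤ => B) ⊤) (n : ℤ),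
      (LA' x : ∀ _ : ℤ, B) n = (x : ∀ _ : ℤ, B) (n + 1) - A' ((x : ∀ _ : ℤ, B) n)) :
    ‖LA - LA'‖ ≤ ‖A - A'‖ := by
  refine ContinuousLinearMap.opNorm_le_bound _ (norm_nonneg _) fun x => ?_
  refine lp.norm_le_of_forall_le (by positivity) fun n => ?_
  have hcoord : (((LA - LA') x : lp (fun _ : ℤ => B) ⊤) : ∀ _ : ℤ, B) n
      = A' ((x : ∀ _ : ℤ, B) n) - A ((x : ∀ _ : ℤ, B) n) := by
    rw [ContinuousLinearMap.sub_apply, lp.coeFn_sub, Pi.sub_apply, hA, hA']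
    abel
  rw [hcoord]
  have h1 : ‖A' ((x : ∀ _ : ℤ, B) n) - A ((x : ∀ _ : ℤ, B) n)‖
      = ‖(A - A') ((x : ∀ _ : ℤ, B) n)‖ := by
    rw [ContinuousLinearMap.sub_apply, norm_sub_rev]
  rw [h1]
  exact ((A - A').le_opNorm _).trans
    (mul_le_mul_of_nonneg_left (lp.norm_apply_le_norm ENNReal.top_ne_zero x n)
      (norm_nonneg _))

/-- Surjectivity of a bounded operator between Banach spaces is an open condition. -/
lemma surj_open {E F : Type*} [NormedAddCommGroup E] [NormedSpace ℝ E] [CompleteSpace E]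
    [NormedAddCommGroup F] [NormedSpace ℝ F] [CompleteSpace F]
    (L : E →L[ℝ] F) (hL : Function.Surjective L) :
    ∃ ε > (0 : ℝ), ∀ L' : E →L[ℝ] F, ‖L' - L‖ < ε → Function.Surjective L' := by
  obtain ⟨C, hC0, hC⟩ := L.exists_preimage_norm_le hL
  refine ⟨1 / (2 * C), by positivity, fun L' hL' y => ?_⟩
  choose g hg hgn using hC
  set r : ℕ → F := fun k => ((fun z => z - L' (g z))^[k]) y with hr
  have hrec : ∀ k, r (k + 1) = r k - L' (g (r k)) := fun k => by
    rw [hr]; simp [Function.iterate_succ_apply']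
  have hstep : ∀ k, ‖r (k + 1)‖ ≤ (1 / 2) * ‖r k‖ := by
    intro k
    have heq : r (k + 1) = (L - L') (g (r k)) := by
      rw [hrec, ContinuousLinearMap.sub_apply, hg]
    rw [heq]
    have h1 : ‖(L - L') (g (r k))‖ ≤ ‖L - L'‖ * ‖g (r k)‖ := (L - L').le_opNorm _
    have h2 : ‖L - L'‖ < 1 / (2 * C) := by rwa [norm_sub_rev]
    have h3 : ‖g (r k)‖ ≤ C * ‖r k‖ := hgn _
    have h4 : ‖L - L'‖ * ‖g (r k)‖ ≤ (1 / (2 * C)) * (C * ‖r k‖) := by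
      apply mul_le_mul h2.le h3 (norm_nonneg _) (by positivity)
    have h5 : (1 / (2 * C)) * (C * ‖r k‖) = (1 / 2) * ‖r k‖ := by
      field_simp
    linarith
  have hbound : ∀ k, ‖r k‖ ≤ (1 / 2 : ℝ) ^ k * ‖y‖ := by
    intro k
    induction k with
    | zero => simp [hr]
    | succ k ih =>
      calc ‖r (k + 1)‖ ≤ (1 / 2) * ‖r k‖ := hstep k
        _ ≤ (1 / 2) * ((1 / 2 : ℝ) ^ k * ‖y‖) := by linarith
        _ = (1 / 2 : ℝ) ^ (k + 1) * ‖y‖ := by ring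
  set s : ℕ → E := fun k => g (r k) with hs
  have hsum : Summable s := by
    apply Summable.of_norm_bounded (g := fun k => (C * ‖y‖) * (1 / 2 : ℝ) ^ k)
    · exact (summable_geometric_of_lt_one (by norm_num) (by norm_num)).mul_left _
    · intro k
      calc ‖s k‖ ≤ C * ‖r k‖ := hgn _
        _ ≤ C * ((1 / 2 : ℝ) ^ k * ‖y‖) := by
            exact mul_le_mul_of_nonneg_left (hbound k) hC0.le
        _ = (C * ‖y‖) * (1 / 2 : ℝ) ^ k := by ring
  refine ⟨∑' k, s k, ?_⟩
  have hmap : L' (∑' k, s k) = ∑' k, L' (s k) := L'.map_tsum hsum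
  have hfun : (fun k => L' (s k)) = fun k => r k - r (k + 1) := by
    funext k; rw [hrec]; abel
  have hr0 : Tendsto r atTop (nhds 0) := by
    apply squeeze_zero_norm hbound
    simpa using
      (tendsto_pow_atTop_nhds_zero_of_lt_one (by norm_num : (0:ℝ) ≤ 1 / 2)
        (by norm_num : (1/2:ℝ) < 1)).mul_const ‖y‖
  have hsumnorm : Summable fun k => ‖r k - r (k + 1)‖ := by
    apply Summable.of_nonneg_of_le (fun k => norm_nonneg _)
      (fun k => ?_) (((summable_geometric_of_lt_one (by norm_num : (0:ℝ) ≤ 1/2)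
        (by norm_num : (1/2:ℝ) < 1))).mul_left (2 * ‖y‖))
    calc ‖r k - r (k + 1)‖ ≤ ‖r k‖ + ‖r (k + 1)‖ := norm_sub_le _ _
      _ ≤ (1 / 2 : ℝ) ^ k * ‖y‖ + (1 / 2 : ℝ) ^ (k + 1) * ‖y‖ :=
          add_le_add (hbound k) (hbound (k + 1))
      _ ≤ 2 * ‖y‖ * (1 / 2 : ℝ) ^ k := by
          have h := norm_nonneg y
          have hp : (0:ℝ) ≤ (1/2:ℝ)^k := by positivity
          have hq : (1/2:ℝ)^(k+1) = (1/2) * (1/2:ℝ)^k := by ring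
          nlinarith
  have htel : HasSum (fun k => r k - r (k + 1)) y := by
    rw [hasSum_iff_tendsto_nat_of_summable_norm hsumnorm]
    have hps : ∀ n : ℕ, ∑ i ∈ range n, (r i - r (i + 1)) = r 0 - r n := fun n =>
      Finset.sum_range_sub' r n
    simp only [hps]
    have : r 0 = y := rfl
    rw [this]
    simpa using tendsto_const_nhds.sub hr0
  rw [hmap, hfun, htel.tsum_eq]

variable [CompleteSpace B]

set_option linter.unusedSectionVars false in
/-- Shadowing implies surjectivity of the induced operator. -/
lemma shadow_surj (T : B ≃L[ℝ] B)
    (L : lp (fun _ : ℤ => B) ⊤ →L[ℝ] lp (fun _ : ℤ => B) ⊤)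
    (hL : ∀ (x : lp (fun _ : ℤ => B) ⊤) (n : ℤ),
      (L x : ∀ _ : ℤ, B) n = (x : ∀ _ : ℤ, B) (n + 1) - T ((x : ∀ _ : ℤ, B) n))
    (hT : Shadowing T) : Function.Surjective L := by
  intro z
  obtain ⟨δ, hδ, hsh⟩ := hT 1 one_pos
  set c : ℝ := δ / (‖z‖ + 1) with hcdef
  have hz1 : (0:ℝ) < ‖z‖ + 1 := by positivity
  have hc : 0 < c := div_pos hδ hz1
  set z' : ℤ → B := fun n => c • (z : ∀ _ : ℤ, B) n with hz'def
  have hz' : ∀ n, ‖z' n‖ < δ := by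
    intro n
    have h1 : ‖(z : ∀ _ : ℤ, B) n‖ ≤ ‖z‖ := lp.norm_apply_le_norm ENNReal.top_ne_zero z n
    have h2 : ‖z' n‖ = c * ‖(z : ∀ _ : ℤ, B) n‖ := by
      rw [hz'def]; simp [norm_smul, abs_of_pos hc]
    have h3 : c * (‖z‖ + 1) = δ := by rw [hcdef]; field_simp
    nlinarith
  -- construct the pseudo-orbit
  let f : ℕ → B := fun k => Nat.rec 0 (fun k fk => T fk + z' k) k
  let g : ℕ → B := fun k => Nat.rec 0 (fun k gk => T.symm (gk - z' (Int.negSucc k))) k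
  let x : ℤ → B := fun n => match n with
    | Int.ofNat k => f k
    | Int.negSucc k => g (k + 1)
  have hx : ∀ n : ℤ, x (n + 1) = T (x n) + z' n := by
    intro n
    match n with
    | Int.ofNat k =>
      show x (Int.ofNat (k + 1)) = T (f k) + z' (Int.ofNat k)
      rfl
    | Int.negSucc 0 =>
      show x 0 = T (g 1) + z' (Int.negSucc 0)
      have : g 1 = T.symm (g 0 - z' (Int.negSucc 0)) := rfl
      show f 0 = _
      rw [this]
      simp [f, g]
    | Int.negSucc (k + 1) =>
      have h1 : Int.negSucc (k + 1) + 1 = Int.negSucc k := by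
        rw [Int.negSucc_eq, Int.negSucc_eq]; push_cast; ring
      rw [h1]
      show g (k + 1) = T (g (k + 2)) + z' (Int.negSucc (k + 1))
      have : g (k + 2) = T.symm (g (k + 1) - z' (Int.negSucc (k + 1))) := rfl
      rw [this]
      simp
  have hpseudo : ∀ n : ℤ, ‖x (n + 1) - T (x n)‖ < δ := by
    intro n; rw [hx n]; simpa using hz' n
  obtain ⟨y, hy⟩ := hsh x hpseudo
  have hmem : Memℓp (fun n : ℤ => x n - (T ^ n) y) ⊤ :=
    memℓp_infty ⟨1, by rintro r ⟨n, rfl⟩; exact (hy n).le⟩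
  set W : lp (fun _ : ℤ => B) ⊤ := ⟨fun n => x n - (T ^ n) y, hmem⟩ with hW
  have hpow : ∀ n : ℤ, (T ^ (n + 1)) y = T ((T ^ n) y) := by
    intro n
    have h1 : T ^ (n + 1) = T * T ^ n := by rw [add_comm, zpow_one_add]
    rw [h1]; rfl
  have hLW : L W = c • z := by
    apply lp.ext
    funext n
    rw [hL W n]
    have hWc : ∀ m : ℤ, (W : ∀ _ : ℤ, B) m = x m - (T ^ m) y := fun m => rfl
    rw [hWc, hWc]
    have hc2 : ((c • z : lp (fun _ : ℤ => B) ⊤) : ∀ _ : ℤ, B) n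
        = c • (z : ∀ _ : ℤ, B) n := by rw [lp.coeFn_smul]; rfl
    rw [hc2]
    have := hx n
    rw [hpow n]
    have hz'n : z' n = c • (z : ∀ _ : ℤ, B) n := rfl
    rw [← hz'n]
    rw [map_sub]
    rw [this]
    abel
  refine ⟨c⁻¹ • W, ?_⟩
  rw [map_smul, hLW, smul_smul, inv_mul_cancel₀ hc.ne', one_smul]

/-- Surjectivity of the induced operator implies shadowing. -/
lemma surj_shadow (S' : B ≃L[ℝ] B)
    (L : lp (fun _ : ℤ => B) ⊤ →L[ℝ] lp (fun _ : ℤ => B) ⊤)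
    (hL : ∀ (x : lp (fun _ : ℤ => B) ⊤) (n : ℤ),
      (L x : ∀ _ : ℤ, B) n = (x : ∀ _ : ℤ, B) (n + 1) - S' ((x : ∀ _ : ℤ, B) n))
    (hs : Function.Surjective L) : Shadowing S' := by
  obtain ⟨C, hC0, hC⟩ := L.exists_preimage_norm_le hs
  intro ε hε
  refine ⟨ε / (2 * C), by positivity, fun x hx => ?_⟩
  have hmem : Memℓp (fun n : ℤ => x (n + 1) - S' (x n)) ⊤ :=
    memℓp_infty ⟨ε / (2 * C), by rintro r ⟨n, rfl⟩; exact (hx n).le⟩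
  set z : lp (fun _ : ℤ => B) ⊤ := ⟨fun n => x (n + 1) - S' (x n), hmem⟩ with hz
  obtain ⟨w, hw, hwn⟩ := hC z
  have hznorm : ‖z‖ ≤ ε / (2 * C) :=
    lp.norm_le_of_forall_le (by positivity) fun n => (hx n).le
  have hwsmall : ∀ n : ℤ, ‖(w : ∀ _ : ℤ, B) n‖ ≤ ε / 2 := by
    intro n
    have h1 : ‖(w : ∀ _ : ℤ, B) n‖ ≤ ‖w‖ := lp.norm_apply_le_norm ENNReal.top_ne_zero w n
    have h2 : ‖w‖ ≤ C * (ε / (2 * C)) := hwn.trans (by nlinarith)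
    have h3 : C * (ε / (2 * C)) = ε / 2 := by field_simp
    linarith
  have hrec : ∀ n : ℤ, x (n + 1) - (w : ∀ _ : ℤ, B) (n + 1)
      = S' (x n - (w : ∀ _ : ℤ, B) n) := by
    intro n
    have h1 : (L w : ∀ _ : ℤ, B) n = (w : ∀ _ : ℤ, B) (n + 1) - S' ((w : ∀ _ : ℤ, B) n) :=
      hL w n
    have h2 : (L w : ∀ _ : ℤ, B) n = x (n + 1) - S' (x n) := by rw [hw]
    rw [map_sub]
    have h3 := h1.symm.trans h2
    calc x (n + 1) - (w : ∀ _ : ℤ, B) (n + 1)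
        = (x (n + 1) - S' (x n)) - ((w : ∀ _ : ℤ, B) (n + 1) - S' ((w : ∀ _ : ℤ, B) n))
          + (S' (x n) - S' ((w : ∀ _ : ℤ, B) n)) := by abel
      _ = S' (x n) - S' ((w : ∀ _ : ℤ, B) n) := by rw [← h3]; abel
  set y : B := x 0 - (w : ∀ _ : ℤ, B) 0 with hy
  have hpow : ∀ n : ℤ, (S' ^ (n + 1)) y = S' ((S' ^ n) y) := by
    intro n
    have h1 : S' ^ (n + 1) = S' * S' ^ n := by rw [add_comm, zpow_one_add]
    rw [h1]; rfl
  have horb : ∀ n : ℤ, x n - (w : ∀ _ : ℤ, B) n = (S' ^ n) y := by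
    intro n
    induction n using Int.induction_on with
    | zero => rw [zpow_zero, hy]; rfl
    | succ k ih =>
      rw [hrec k, ih, ← hpow k]
    | pred k ih =>
      apply S'.injective
      have h1 : (-(k:ℤ) - 1) + 1 = -(k:ℤ) := by ring
      have h2 := hrec (-(k:ℤ) - 1)
      rw [h1] at h2
      rw [← h2, ih, ← hpow (-(k:ℤ) - 1), h1]
  refine ⟨y, fun n => ?_⟩
  have h1 : x n - (S' ^ n) y = (w : ∀ _ : ℤ, B) n := by
    rw [← horb n]; abel
  rw [h1]
  exact lt_of_le_of_lt (hwsmall n) (by linarith)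

end Aux

/-- for the induced operators on `ℓ^∞(ℤ,B)` one has `‖T_∞ - S_∞‖ ≤ ‖T - S‖`;
consequently, the shadowing property is open in the operator-norm topology on automorphisms. -/
theorem stmt5 {B : Type*} [NormedAddCommGroup B] [NormedSpace ℝ B] [CompleteSpace B]
    (T S : B ≃L[ℝ] B)
    (LT LS : lp (fun _ : ℤ => B) ⊤ →L[ℝ] lp (fun _ : ℤ => B) ⊤)
    (hLT : ∀ (x : lp (fun _ : ℤ => B) ⊤) (n : ℤ),
      (LT x : ∀ _ : ℤ, B) n = (x : ∀ _ : ℤ, B) (n + 1) - T ((x : ∀ _ : ℤ, B) n))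
    (hLS : ∀ (x : lp (fun _ : ℤ => B) ⊤) (n : ℤ),
      (LS x : ∀ _ : ℤ, B) n = (x : ∀ _ : ℤ, B) (n + 1) - S ((x : ∀ _ : ℤ, B) n)) :
    ‖LT - LS‖ ≤ ‖(T : B →L[ℝ] B) - (S : B →L[ℝ] B)‖ ∧
    (Shadowing T → ∃ ε > (0 : ℝ), ∀ S' : B ≃L[ℝ] B,
      ‖(T : B →L[ℝ] B) - (S' : B →L[ℝ] B)‖ < ε → Shadowing S') := by
  constructor
  · exact norm_Ldiff_le _ _ LT LS hLT hLS
  · intro hsh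
    obtain ⟨ε, hε, hball⟩ := surj_open LT (shadow_surj T LT hLT hsh)
    refine ⟨ε, hε, fun S' hS' => ?_⟩
    apply surj_shadow S' (Linf (S' : B →L[ℝ] B)) (Linf_apply _)
    apply hball
    calc ‖Linf (S' : B →L[ℝ] B) - LT‖ ≤ ‖(S' : B →L[ℝ] B) - (T : B →L[ℝ] B)‖ :=
          norm_Ldiff_le _ _ _ _ (Linf_apply _) hLT
      _ = ‖(T : B →L[ℝ] B) - (S' : B →L[ℝ] B)‖ := norm_sub_rev _ _
      _ < ε := hS'
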